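/- Let G be a finite simple graph with positive real vertex weights ω, and let u, v be adjacent vertices of G such that N[u] ⊆ N[v] and ω(v) > ω(u). Let G' be the graph obtained from G by deleting the edge {u,v}, and let ω' agree with ω except ω'(v) = ω(v) − ω(u). Then α_{ω'}(G') = α_ω(G). -/

import Mathlib

open scoped Classical

/-- `S` is an independent set of vertices in `G`: no two members are adjacent. -/
def IsIndepSet {V : Type*} (G : SimpleGraph V) (S : Finset V) : Prop :=
  ∀ a ∈ S, ∀ b ∈ S, ¬ G.Adj a b

/-- The maximum total `w`-weight of an independent set of `G` contained in `A`
(the weighted independence number of the subgraph of `G` induced on `A`). -/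
noncomputable def alphaOn {V : Type*} [Fintype V] (G : SimpleGraph V) (w : V → ℝ)
    (A : Set V) : ℝ :=
  sSup {x : ℝ | ∃ S : Finset V, ↑S ⊆ A ∧ IsIndepSet G S ∧ x = ∑ v ∈ S, w v}

/-- The maximum total `w`-weight of an independent set of `G`. -/
noncomputable def alpha {V : Type*} [Fintype V] (G : SimpleGraph V) (w : V → ℝ) : ℝ :=
  alphaOn G w Set.univ

/-- `S` is a maximum `w`-weight independent set of `G`. -/
def IsMWIS {V : Type*} [Fintype V] (G : SimpleGraph V) (w : V → ℝ) (S : Finset V) : Prop :=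
  IsIndepSet G S ∧ ∑ v ∈ S, w v = alpha G w

/-- The closed neighborhood `N[v]` of a vertex. -/
def closedNbhd {V : Type*} (G : SimpleGraph V) (v : V) : Set V :=
  insert v (G.neighborSet v)

/-- The open neighborhood `N(S)` of a set of vertices. -/
def setNbhd {V : Type*} (G : SimpleGraph V) (S : Set V) : Set V :=
  (⋃ s ∈ S, G.neighborSet s) \ S

/-- The closed neighborhood `N[S]` of a set of vertices. -/
def closedSetNbhd {V : Type*} (G : SimpleGraph V) (S : Set V) : Set V :=
  setNbhd G S ∪ S

lemma bdd_aux {V : Type*} [Fintype V] (H : SimpleGraph V) (f : V → ℝ) :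
    BddAbove {x : ℝ | ∃ S : Finset V, ↑S ⊆ (Set.univ : Set V) ∧ IsIndepSet H S ∧ x = ∑ v ∈ S, f v} := by
  apply Set.Finite.bddAbove
  apply Set.Finite.subset (Set.finite_range (fun S : Finset V => ∑ v ∈ S, f v))
  rintro x ⟨S, -, -, rfl⟩
  exact ⟨S, rfl⟩

lemma ne_aux {V : Type*} [Fintype V] (H : SimpleGraph V) (f : V → ℝ) :
    {x : ℝ | ∃ S : Finset V, ↑S ⊆ (Set.univ : Set V) ∧ IsIndepSet H S ∧ x = ∑ v ∈ S, f v}.Nonempty :=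
  ⟨0, ∅, by simp, by intro a ha; simp at ha, by simp⟩

theorem stmt_0 {V : Type*} [Fintype V] (G : SimpleGraph V) (w : V → ℝ)
    (hw : ∀ x, 0 < w x) (u v : V) (hadj : G.Adj u v)
    (hsub : closedNbhd G u ⊆ closedNbhd G v) (hlt : w u < w v) :
    alpha (G.deleteEdges {s(u, v)}) (Function.update w v (w v - w u)) = alpha G w := by
  classical
  have huv : u ≠ v := hadj.ne
  set w' := Function.update w v (w v - w u) with hw'
  set G' := G.deleteEdges {s(u, v)} with hG'
  unfold alpha alphaOn
  apply le_antisymm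
  · apply csSup_le (ne_aux G' w')
    rintro x ⟨T, -, hT, rfl⟩
    by_cases hvT : v ∈ T
    · by_cases huT : u ∈ T
      · -- both endpoints in T: T.erase u is independent in G with the same weight
        have hind : IsIndepSet G (T.erase u) := by
          intro a ha b hb hab
          have ha' := Finset.mem_of_mem_erase ha
          have hb' := Finset.mem_of_mem_erase hb
          have hne : s(a, b) ∉ ({s(u, v)} : Set (Sym2 V)) := by
            simp only [Set.mem_singleton_iff, Sym2.eq_iff]
            rintro (⟨rfl, rfl⟩ | ⟨rfl, rfl⟩)
            · exact (Finset.mem_erase.mp ha).1 rfl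
            · exact (Finset.mem_erase.mp hb).1 rfl
          exact hT a ha' b hb' (SimpleGraph.deleteEdges_adj.mpr ⟨hab, hne⟩)
        have hsum : ∑ t ∈ T, w' t = ∑ t ∈ T.erase u, w t := by
          have h1 : ∑ t ∈ T, w' t = (w v - w u) + ∑ t ∈ T.erase v, w t := by
            rw [hw', Finset.sum_update_of_mem hvT, Finset.sdiff_singleton_eq_erase]
          have h2 : ∑ t ∈ T, w t = w v + ∑ t ∈ T.erase v, w t :=
            (Finset.add_sum_erase _ _ hvT).symm
          have h3 : ∑ t ∈ T, w t = w u + ∑ t ∈ T.erase u, w t :=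
            (Finset.add_sum_erase _ _ huT).symm
          linarith
        exact le_csSup (bdd_aux G w) ⟨T.erase u, Set.subset_univ _, hind, hsum⟩
      · -- v ∈ T, u ∉ T
        have hind : IsIndepSet G T := by
          intro a ha b hb hab
          have hne : s(a, b) ∉ ({s(u, v)} : Set (Sym2 V)) := by
            simp only [Set.mem_singleton_iff, Sym2.eq_iff]
            rintro (⟨rfl, rfl⟩ | ⟨rfl, rfl⟩)
            · exact huT ha
            · exact huT hb
          exact hT a ha b hb (SimpleGraph.deleteEdges_adj.mpr ⟨hab, hne⟩)
        have hsum : ∑ t ∈ T, w' t ≤ ∑ t ∈ T, w t := by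
          have h1 : ∑ t ∈ T, w' t = (w v - w u) + ∑ t ∈ T.erase v, w t := by
            rw [hw', Finset.sum_update_of_mem hvT, Finset.sdiff_singleton_eq_erase]
          have h2 : ∑ t ∈ T, w t = w v + ∑ t ∈ T.erase v, w t :=
            (Finset.add_sum_erase _ _ hvT).symm
          have := hw u
          linarith
        exact le_trans hsum (le_csSup (bdd_aux G w) ⟨T, Set.subset_univ _, hind, rfl⟩)
    · -- v ∉ T
      have hind : IsIndepSet G T := by
        intro a ha b hb hab
        have hne : s(a, b) ∉ ({s(u, v)} : Set (Sym2 V)) := by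
          simp only [Set.mem_singleton_iff, Sym2.eq_iff]
          rintro (⟨rfl, rfl⟩ | ⟨rfl, rfl⟩)
          · exact hvT hb
          · exact hvT ha
        exact hT a ha b hb (SimpleGraph.deleteEdges_adj.mpr ⟨hab, hne⟩)
      have hsum : ∑ t ∈ T, w' t = ∑ t ∈ T, w t :=
        Finset.sum_congr rfl fun t ht =>
          Function.update_of_ne (fun h => hvT (by rw [← h]; exact ht)) _ _
      exact le_csSup (bdd_aux G w) ⟨T, Set.subset_univ _, hind, hsum⟩
  · apply csSup_le (ne_aux G w)
    rintro x ⟨S, -, hS, rfl⟩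
    by_cases hvS : v ∈ S
    · have huS : u ∉ S := fun h => hS u h v hvS hadj
      have hind : IsIndepSet G' (insert u S) := by
        intro a ha b hb hab
        rw [hG', SimpleGraph.deleteEdges_adj] at hab
        obtain ⟨hab1, hab2⟩ := hab
        simp only [Set.mem_singleton_iff] at hab2
        rcases Finset.mem_insert.mp ha with hau | haS
        · rcases Finset.mem_insert.mp hb with hbu | hbS
          · exact G.loopless.irrefl _ (hau ▸ hbu ▸ hab1)
          · have hbmem : b ∈ closedNbhd G v :=
              hsub (Set.mem_insert_iff.mpr (Or.inr (hau ▸ hab1)))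
            rcases Set.mem_insert_iff.mp hbmem with hbv | hbv
            · exact hab2 (by rw [hau, hbv])
            · exact hS v hvS b hbS hbv
        · rcases Finset.mem_insert.mp hb with hbu | hbS
          · have hamem : a ∈ closedNbhd G v :=
              hsub (Set.mem_insert_iff.mpr (Or.inr (hbu ▸ hab1.symm)))
            rcases Set.mem_insert_iff.mp hamem with hav | hav
            · exact hab2 (by rw [hav, hbu]; exact Sym2.eq_swap)
            · exact hS v hvS a haS hav
          · exact hS a haS b hbS hab1
      have hsum : ∑ t ∈ insert u S, w' t = ∑ t ∈ S, w t := by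
        rw [Finset.sum_insert huS]
        have h1 : ∑ t ∈ S, w' t = (w v - w u) + ∑ t ∈ S.erase v, w t := by
          rw [hw', Finset.sum_update_of_mem hvS, Finset.sdiff_singleton_eq_erase]
        have h2 : ∑ t ∈ S, w t = w v + ∑ t ∈ S.erase v, w t :=
          (Finset.add_sum_erase _ _ hvS).symm
        have hwu : w' u = w u := Function.update_of_ne huv _ _
        linarith
      exact le_csSup (bdd_aux G' w') ⟨insert u S, Set.subset_univ _, hind, hsum.symm⟩
    · have hind : IsIndepSet G' S := by
        intro a ha b hb hab
        rw [hG', SimpleGraph.deleteEdges_adj] at hab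
        exact hS a ha b hb hab.1
      have hsum : ∑ t ∈ S, w' t = ∑ t ∈ S, w t :=
        Finset.sum_congr rfl fun t ht =>
          Function.update_of_ne (fun h => hvS (by rw [← h]; exact ht)) _ _
      exact le_csSup (bdd_aux G' w') ⟨S, Set.subset_univ _, hind, hsum.symm⟩
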